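/- Let (x_K)_{K≥1} ⊆ {0,1}^ℤ be a good sequence: (x_K) is coordinatewise non-increasing with coordinatewise limit x_∞, and there is an increasing sequence (N_i) of positive integers such that for every K ∈ ℕ ∪ {∞}, x_K is quasi-generic along (N_i) for a measure ν_K, and ν_K(1) → ν_∞(1) as K → ∞. Then ν_K → ν_∞ in the weak-* topology. -/

import Mathlib

open MeasureTheory Filter Topology

/-- The full shift space `{0,1}^ℤ`, with `Bool` playing the role of `{0,1}`
(`false` ↔ `0`, `true` ↔ `1`). -/
abbrev BinSeq : Type := ℤ → Bool

/-- The left shift `σ`. -/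
def shift : BinSeq → BinSeq := fun x n => x (n + 1)

/-- The product shift `σ × σ`. -/
def shift2 : BinSeq × BinSeq → BinSeq × BinSeq := Prod.map shift shift

/-- The product shift `σ × σ × σ` on triples `((w,x),y)`. -/
def shift3 : (BinSeq × BinSeq) × BinSeq → (BinSeq × BinSeq) × BinSeq := Prod.map shift2 shift

/-- Coordinatewise multiplication `M(x,y)` of two 0-1 sequences. -/
def Mmul : BinSeq × BinSeq → BinSeq := fun p n => p.1 n && p.2 n

/-- The map `N((w,x),y) = (1-y)·w + y·x` (coordinatewise: `x` where `y = 1`, `w` where `y = 0`). -/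
def Nmap : (BinSeq × BinSeq) × BinSeq → BinSeq := fun t n => bif t.2 n then t.1.2 n else t.1.1 n

/-- The coordinatewise partial order `y ≤ x` on `{0,1}^ℤ`. -/
def leSeq (y x : BinSeq) : Prop := ∀ n, y n ≤ x n

/-- A subshift: a closed, shift-invariant subset of `{0,1}^ℤ`. -/
def IsSubshift (X : Set BinSeq) : Prop := IsClosed X ∧ shift ⁻¹' X = X

/-- The set of `T`-invariant Borel probability measures. -/
def InvProb {α : Type*} [MeasurableSpace α] (T : α → α) : Set (Measure α) :=
  {μ | IsProbabilityMeasure μ ∧ Measure.map T μ = μ}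

/-- `𝓜(X)`: shift-invariant Borel probability measures concentrated on `X`. -/
def MeasOn (X : Set BinSeq) : Set (Measure BinSeq) :=
  {μ | μ ∈ InvProb shift ∧ μ X = 1}

/-- `𝓜(Z)` for `Z ⊆ {0,1}^ℤ × {0,1}^ℤ`. -/
def MeasOn2 (Z : Set (BinSeq × BinSeq)) : Set (Measure (BinSeq × BinSeq)) :=
  {ρ | ρ ∈ InvProb shift2 ∧ ρ Z = 1}

/-- `X` is a measure-theoretically subordinate subshift with base measure `ν`:
`𝓜(X) = {M_*(ρ) : ρ ∈ 𝓜({0,1}^ℤ × {0,1}^ℤ, σ×σ), (π₁)_*(ρ) = ν}`. -/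
def Subord (X : Set BinSeq) (ν : Measure BinSeq) : Prop :=
  MeasOn X = {μ | ∃ ρ ∈ InvProb shift2,
    Measure.map Prod.fst ρ = ν ∧ Measure.map Mmul ρ = μ}

/-- `X` is a sandwich measure-theoretically subordinate subshift with pre-base measure `ρ`:
`𝓜(X) = {N_*(κ) : κ ∈ 𝓜(({0,1}^ℤ)³), (π₁,₂)_*(κ) = ρ}`. -/
def SandwichSubord (X : Set BinSeq) (ρ : Measure (BinSeq × BinSeq)) : Prop :=
  MeasOn X = {μ | ∃ κ ∈ InvProb shift3,
    Measure.map Prod.fst κ = ρ ∧ Measure.map Nmap κ = μ}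

/-- `ρ({(w,x) : w ≤ x coordinatewise}) = 1`: a pre-base measure satisfying this is a base
measure. -/
def AboveDiag (ρ : Measure (BinSeq × BinSeq)) : Prop :=
  ρ {p : BinSeq × BinSeq | ∀ n, p.1 n ≤ p.2 n} = 1

/-- The cylinder `{x : x₀ = b}`. -/
def cylB (b : Bool) : Set BinSeq := {x : BinSeq | x 0 = b}

/-- The set `[w,x] = {σ^k y : w ≤ y ≤ x, k ∈ ℤ}`. -/
def sandwichSet (w x : BinSeq) : Set BinSeq :=
  {z | ∃ (k : ℤ) (y : BinSeq), (∀ n, w n ≤ y n) ∧ (∀ n, y n ≤ x n) ∧ z = fun n => y (n + k)}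

/-- Topological entropy (base-2) of a subshift: exponential growth rate of the number of
`n`-blocks appearing in `X`. -/
noncomputable def htop (X : Set BinSeq) : ℝ :=
  Filter.limsup (fun n : ℕ =>
    Real.logb 2
      ((Set.ncard {A : Fin n → Bool | ∃ x ∈ X, ∀ i : Fin n, x ((i : ℕ) : ℤ) = A i} : ℝ))
      / (n : ℝ)) Filter.atTop

/-- Kolmogorov–Sinai entropy (base-2) of a shift-invariant measure on `{0,1}^ℤ`,
computed via the generating partition into cylinders. -/
noncomputable def entropy (μ : Measure BinSeq) : ℝ :=
  Filter.limsup (fun n : ℕ =>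
    (∑ A : Fin n → Bool,
      Real.negMulLog ((μ {x : BinSeq | ∀ i : Fin n, x ((i : ℕ) : ℤ) = A i}).toReal))
      / ((n : ℝ) * Real.log 2)) Filter.atTop

/-- Kolmogorov–Sinai entropy (base-2) of a `σ×σ`-invariant measure on
`{0,1}^ℤ × {0,1}^ℤ`. -/
noncomputable def entropy2 (ρ : Measure (BinSeq × BinSeq)) : ℝ :=
  Filter.limsup (fun n : ℕ =>
    (∑ A : Fin n → Bool, ∑ B : Fin n → Bool,
      Real.negMulLog ((ρ {p : BinSeq × BinSeq |
        (∀ i : Fin n, p.1 ((i : ℕ) : ℤ) = A i) ∧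
        (∀ i : Fin n, p.2 ((i : ℕ) : ℤ) = B i)}).toReal))
      / ((n : ℝ) * Real.log 2)) Filter.atTop

open scoped Classical in
/-- Topological pressure (base-2) of a subshift `X` with potential `φ`:
`𝒫_{X,φ} = lim (1/n) log₂ Σ_{A ∈ ℒ_n(X)} 2^{sup_{x ∈ [A] ∩ X} φ⁽ⁿ⁾(x)}`. -/
noncomputable def pressure (X : Set BinSeq) (φ : BinSeq → ℝ) : ℝ :=
  Filter.limsup (fun n : ℕ =>
    Real.logb 2 (∑ A : Fin n → Bool,
      if ∃ x ∈ X, ∀ i : Fin n, x ((i : ℕ) : ℤ) = A i then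
        (2 : ℝ) ^ sSup {r : ℝ | ∃ x ∈ X, (∀ i : Fin n, x ((i : ℕ) : ℤ) = A i) ∧
          r = ∑ k ∈ Finset.range n, φ (shift^[k] x)}
      else 0) / (n : ℝ)) Filter.atTop

/-- Birkhoff average of a continuous function along the first `N` points of the `T`-orbit. -/
noncomputable def birkAvg {α : Type*} [TopologicalSpace α] (T : α → α) (x : α) (N : ℕ)
    (f : C(α, ℝ)) : ℝ :=
  (∑ n ∈ Finset.range N, f (T^[n] x)) / (N : ℝ)

/-- `x` is quasi-generic for `μ` along `(N i)`: the empirical measures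
`(1/N_i) Σ_{n<N_i} δ_{T^n x}` converge weakly-* to `μ`. -/
def QuasiGenericAlong {α : Type*} [TopologicalSpace α] [MeasurableSpace α]
    (T : α → α) (x : α) (N : ℕ → ℕ) (μ : Measure α) : Prop :=
  ∀ f : C(α, ℝ), Filter.Tendsto (fun i => birkAvg T x (N i) f) Filter.atTop
    (nhds (∫ y, f y ∂μ))

/-- `x` is generic for `μ`. -/
def GenericFor {α : Type*} [TopologicalSpace α] [MeasurableSpace α]
    (T : α → α) (x : α) (μ : Measure α) : Prop :=
  QuasiGenericAlong T x (fun i => i) μ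

/-- Weak-* convergence of a sequence of measures. -/
def WeakTendsto {α : Type*} [TopologicalSpace α] [MeasurableSpace α]
    (μs : ℕ → Measure α) (μ : Measure α) : Prop :=
  ∀ f : C(α, ℝ), Filter.Tendsto (fun K => ∫ y, f y ∂(μs K)) Filter.atTop
    (nhds (∫ y, f y ∂μ))

/-- `V(y)`: the invariant measures for which `y` is quasi-generic (along some
increasing sequence). -/
def Vset (y : BinSeq) : Set (Measure BinSeq) :=
  {μ | μ ∈ InvProb shift ∧ ∃ N : ℕ → ℕ, StrictMono N ∧ QuasiGenericAlong shift y N μ}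

/-- `V_{(N_i)}(y)`: the invariant measures for which `y` is quasi-generic along a
subsequence of `(N_i)`. -/
def VsetAlong (N : ℕ → ℕ) (y : BinSeq) : Set (Measure BinSeq) :=
  {μ | μ ∈ InvProb shift ∧ ∃ φ : ℕ → ℕ, StrictMono φ ∧ QuasiGenericAlong shift y (N ∘ φ) μ}

/-- `β` is the Bernoulli product measure on `{0,1}^ℤ` with `β({x : x₀ = 0}) = p`. -/
def IsBernoulli (p : ENNReal) (β : Measure BinSeq) : Prop :=
  IsProbabilityMeasure β ∧ ∀ (s : Finset ℤ) (A : ℤ → Bool),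
    β {x : BinSeq | ∀ i ∈ s, x i = A i} = ∏ i ∈ s, (if A i = false then p else 1 - p)

/-! ### Auxiliary lemmas for `stmt4` -/

lemma shift_iter' (s : ℕ) (x : BinSeq) (i : ℤ) : (shift^[s]) x i = x (i + s) := by
  induction s generalizing x with
  | zero => simp
  | succ n ih =>
    rw [Function.iterate_succ, Function.comp_apply, ih]
    simp [shift]; ring_nf

lemma modulus (f : C(BinSeq, ℝ)) {ε : ℝ} (hε : 0 < ε) :
    ∃ m : ℕ, ∀ y z : BinSeq, (∀ i : ℤ, |i| ≤ (m : ℤ) → y i = z i) → |f y - f z| ≤ ε := by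
  have key : ∀ y : BinSeq, ∃ I : Finset ℤ,
      ∀ z : BinSeq, (∀ i ∈ I, z i = y i) → |f z - f y| < ε / 2 := by
    intro y
    have hc : ContinuousAt f y := f.continuous.continuousAt
    have hU : f ⁻¹' Metric.ball (f y) (ε / 2) ∈ nhds y :=
      hc (Metric.ball_mem_nhds _ (by linarith))
    rw [nhds_pi, Filter.mem_pi] at hU
    obtain ⟨I, hIfin, t, ht, hsub⟩ := hU
    refine ⟨hIfin.toFinset, fun z hz => ?_⟩
    have hzmem : z ∈ I.pi t := by
      intro i hi
      rw [hz i (hIfin.mem_toFinset.2 hi)]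
      exact mem_of_mem_nhds (ht i)
    have := hsub hzmem
    simpa [Real.dist_eq] using this
  choose I hI using key
  have hopen : ∀ y : BinSeq, IsOpen {z : BinSeq | ∀ i ∈ I y, z i = y i} := by
    intro y
    have : {z : BinSeq | ∀ i ∈ I y, z i = y i} =
        Set.pi (I y : Set ℤ) (fun i => {y i}) := by
      ext z; simp [Set.mem_pi]
    rw [this]
    exact isOpen_set_pi (Finset.finite_toSet _) (fun i _ => isOpen_discrete _)
  obtain ⟨s, hs⟩ := isCompact_univ.elim_finite_subcover
    (fun y : BinSeq => {z : BinSeq | ∀ i ∈ I y, z i = y i}) hopen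
    (fun z _ => Set.mem_iUnion.2 ⟨z, fun i _ => rfl⟩)
  refine ⟨(s.sup I).sup Int.natAbs, fun y z hyz => ?_⟩
  obtain ⟨y₀, hy₀s, hy₀⟩ : ∃ y₀ ∈ s, ∀ i ∈ I y₀, y i = y₀ i := by
    have := hs (Set.mem_univ y)
    simpa using this
  have hbound : ∀ i ∈ I y₀, |i| ≤ (((s.sup I).sup Int.natAbs : ℕ) : ℤ) := by
    intro i hi
    have h1 : i ∈ s.sup I := Finset.mem_sup.2 ⟨y₀, hy₀s, hi⟩
    have h2 : i.natAbs ≤ (s.sup I).sup Int.natAbs := Finset.le_sup h1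
    rw [Int.abs_eq_natAbs]
    exact_mod_cast h2
  have hz : ∀ i ∈ I y₀, z i = y₀ i := fun i hi => by
    rw [← hyz i (hbound i hi)]; exact hy₀ i hi
  have h1 := hI y₀ y hy₀
  have h2 := hI y₀ z hz
  calc |f y - f z| ≤ |f y - f y₀| + |f y₀ - f z| := abs_sub_le _ _ _
    _ ≤ ε / 2 + ε / 2 := by
        rw [abs_sub_comm (f y₀) (f z)]
        exact add_le_add h1.le h2.le
    _ = ε := by ring

noncomputable def gco (t : ℤ) : C(BinSeq, ℝ) :=
  ⟨fun z => if z t then 1 else 0,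
    (continuous_of_discreteTopology (f := fun b : Bool => if b then (1:ℝ) else 0)).comp
      (continuous_apply t)⟩

lemma measurable_shift : Measurable shift :=
  (continuous_pi fun n => continuous_apply (n + 1)).measurable

lemma measurable_coordSet (t : ℤ) : MeasurableSet {z : BinSeq | z t = true} := by
  have h : {z : BinSeq | z t = true} = (fun z : BinSeq => z t) ⁻¹' {true} := rfl
  rw [h]
  exact measurable_pi_apply t (measurableSet_singleton true)

lemma integral_gco (t : ℤ) (ν : Measure BinSeq) :
    ∫ z, gco t z ∂ν = (ν {z : BinSeq | z t = true}).toReal := by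
  rw [← measureReal_def, ← MeasureTheory.integral_indicator_one (measurable_coordSet t)]
  congr 1
  ext z
  by_cases h : z t <;> simp [gco, h, Set.indicator]

lemma inv_iter (ν : Measure BinSeq) (hν : Measure.map shift ν = ν) (s : ℕ) :
    ∀ A : Set BinSeq, MeasurableSet A → ν ((shift^[s]) ⁻¹' A) = ν A := by
  induction s with
  | zero => simp
  | succ n ih =>
    intro A hA
    rw [Function.iterate_succ', Set.preimage_comp]
    have h1 : ν (shift ⁻¹' A) = ν A := by
      conv_rhs => rw [← hν]
      rw [Measure.map_apply measurable_shift hA]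
    rw [← h1]
    exact ih _ (measurable_shift hA)

lemma inv_coord (ν : Measure BinSeq) (hν : Measure.map shift ν = ν) (t : ℤ) :
    ν {z : BinSeq | z t = true} = ν (cylB true) := by
  rcases le_or_gt 0 t with ht | ht
  · have : {z : BinSeq | z t = true} = (shift^[t.toNat]) ⁻¹' (cylB true) := by
      ext z
      simp only [Set.mem_preimage, cylB, Set.mem_setOf_eq, shift_iter']
      rw [Int.toNat_of_nonneg ht]; simp
    rw [this]
    exact inv_iter ν hν _ _ (measurable_coordSet 0)
  · have : cylB true = (shift^[(-t).toNat]) ⁻¹' {z : BinSeq | z t = true} := by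
      ext z
      simp only [Set.mem_preimage, cylB, Set.mem_setOf_eq, shift_iter']
      rw [Int.toNat_of_nonneg (by omega)]
      norm_num
    rw [this]
    exact (inv_iter ν hν _ _ (measurable_coordSet t)).symm

lemma key_ineq (f : C(BinSeq, ℝ)) (m : ℕ) {ε' : ℝ} (hε' : 0 ≤ ε')
    (hmod : ∀ y z : BinSeq, (∀ i : ℤ, |i| ≤ (m : ℤ) → y i = z i) → |f y - f z| ≤ ε')
    (w z : BinSeq) (hle : ∀ n, z n ≤ w n) (N : ℕ) :
    |birkAvg shift w N f - birkAvg shift z N f| ≤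
      ε' + 2 * ‖f‖ * ∑ t ∈ Finset.Icc (-(m:ℤ)) m,
        (birkAvg shift w N (gco t) - birkAvg shift z N (gco t)) := by
  have hfnorm : (0:ℝ) ≤ ‖f‖ := norm_nonneg f
  have hterm_nonneg : ∀ (t : ℤ) (n : ℕ),
      (0:ℝ) ≤ gco t (shift^[n] w) - gco t (shift^[n] z) := by
    intro t n
    have h := hle (t + n)
    simp only [gco, ContinuousMap.coe_mk, shift_iter']
    cases hw : w (t + (n:ℤ)) <;> cases hz : z (t + (n:ℤ))
    · simp [hw, hz]
    · rw [hw, hz] at h; exact absurd h (by decide)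
    · simp [hw, hz]
    · simp [hw, hz]
  have hper : ∀ n : ℕ,
      |f (shift^[n] w) - f (shift^[n] z)| ≤
        ε' + 2 * ‖f‖ * ∑ t ∈ Finset.Icc (-(m:ℤ)) m,
          (gco t (shift^[n] w) - gco t (shift^[n] z)) := by
    intro n
    set S := ∑ t ∈ Finset.Icc (-(m:ℤ)) m, (gco t (shift^[n] w) - gco t (shift^[n] z)) with hS
    have hSnn : 0 ≤ S := Finset.sum_nonneg fun t _ => hterm_nonneg t n
    by_cases h : ∀ t ∈ Finset.Icc (-(m:ℤ)) m, w (t + n) = z (t + n)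
    · have hagree : ∀ i : ℤ, |i| ≤ (m:ℤ) → (shift^[n] w) i = (shift^[n] z) i := by
        intro i hi
        rw [shift_iter', shift_iter']
        exact h i (Finset.mem_Icc.2 (abs_le.1 hi))
      have := hmod _ _ hagree
      nlinarith
    · push_neg at h
      obtain ⟨t₀, ht₀, hne⟩ := h
      have h1 : gco t₀ (shift^[n] w) - gco t₀ (shift^[n] z) = 1 := by
        have h := hle (t₀ + n)
        simp only [gco, ContinuousMap.coe_mk, shift_iter']
        cases hw : w (t₀ + (n:ℤ)) <;> cases hz : z (t₀ + (n:ℤ))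
        · exact absurd (hw.trans hz.symm) hne
        · rw [hw, hz] at h; exact absurd h (by decide)
        · simp [hw, hz]
        · exact absurd (hw.trans hz.symm) hne
      have hS1 : (1:ℝ) ≤ S := by
        rw [← h1]
        exact Finset.single_le_sum (fun t _ => hterm_nonneg t n) ht₀
      have hb1 : |f (shift^[n] w)| ≤ ‖f‖ := f.norm_coe_le_norm _
      have hb2 : |f (shift^[n] z)| ≤ ‖f‖ := f.norm_coe_le_norm _
      have : |f (shift^[n] w) - f (shift^[n] z)| ≤ 2 * ‖f‖ := by
        calc |f (shift^[n] w) - f (shift^[n] z)| ≤ _ + _ := abs_sub _ _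
          _ ≤ 2 * ‖f‖ := by linarith
      nlinarith
  rcases Nat.eq_zero_or_pos N with hN | hN
  · subst hN
    simp only [birkAvg, Finset.range_zero, Finset.sum_empty, Nat.cast_zero, div_zero,
      sub_zero, abs_zero, sub_self]
    simp
    positivity
  · have hNpos : (0:ℝ) < N := by exact_mod_cast hN
    have hLHS : birkAvg shift w N f - birkAvg shift z N f =
        (∑ n ∈ Finset.range N, (f (shift^[n] w) - f (shift^[n] z))) / N := by
      rw [birkAvg, birkAvg, Finset.sum_sub_distrib, sub_div]
    rw [hLHS, abs_div, abs_of_pos hNpos, div_le_iff₀ hNpos]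
    calc |∑ n ∈ Finset.range N, (f (shift^[n] w) - f (shift^[n] z))|
        ≤ ∑ n ∈ Finset.range N, |f (shift^[n] w) - f (shift^[n] z)| :=
          Finset.abs_sum_le_sum_abs _ _
      _ ≤ ∑ n ∈ Finset.range N, (ε' + 2 * ‖f‖ *
            ∑ t ∈ Finset.Icc (-(m:ℤ)) m, (gco t (shift^[n] w) - gco t (shift^[n] z))) :=
          Finset.sum_le_sum fun n _ => hper n
      _ = N * ε' + 2 * ‖f‖ * ∑ n ∈ Finset.range N,
            ∑ t ∈ Finset.Icc (-(m:ℤ)) m, (gco t (shift^[n] w) - gco t (shift^[n] z)) := by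
          rw [Finset.sum_add_distrib, Finset.sum_const, ← Finset.mul_sum]
          simp [mul_comm]
      _ = (ε' + 2 * ‖f‖ * ∑ t ∈ Finset.Icc (-(m:ℤ)) m,
            (birkAvg shift w N (gco t) - birkAvg shift z N (gco t))) * N := by
          rw [Finset.sum_comm]
          have : ∀ t : ℤ, birkAvg shift w N (gco t) - birkAvg shift z N (gco t) =
              (∑ n ∈ Finset.range N, (gco t (shift^[n] w) - gco t (shift^[n] z))) / N := by
            intro t
            rw [birkAvg, birkAvg, Finset.sum_sub_distrib, sub_div]
          simp only [this]
          rw [← Finset.sum_div]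
          field_simp

/-- If `(x_K)` is a good sequence (coordinatewise non-increasing with limit
`x_∞`, all quasi-generic along a common sequence `(N_i)` for measures `ν_K`, and
`ν_K(1) → ν_∞(1)`), then `ν_K → ν_∞` in the weak-* topology. -/
theorem stmt4 (x : ℕ → BinSeq) (xinf : BinSeq) (N : ℕ → ℕ)
    (ν : ℕ → Measure BinSeq) (νinf : Measure BinSeq)
    (hmono : ∀ n : ℤ, Antitone (fun K => x K n))
    (hlim : ∀ n : ℤ, ∃ K0, ∀ K ≥ K0, x K n = xinf n)
    (hN : StrictMono N)
    (hP : ∀ K, ν K ∈ InvProb shift) (hPinf : νinf ∈ InvProb shift)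
    (hqg : ∀ K, QuasiGenericAlong shift (x K) N (ν K))
    (hqginf : QuasiGenericAlong shift xinf N νinf)
    (hdens : Filter.Tendsto (fun K => ((ν K) (cylB true)).toReal) Filter.atTop
      (nhds ((νinf (cylB true)).toReal))) :
    WeakTendsto ν νinf := by
  intro f
  rw [Metric.tendsto_atTop]
  intro ε hε
  have hxle : ∀ K, ∀ n : ℤ, xinf n ≤ x K n := by
    intro K n
    obtain ⟨K0, hK0⟩ := hlim n
    have h1 : x (max K K0) n = xinf n := hK0 _ (le_max_right _ _)
    rw [← h1]
    exact hmono n (le_max_left _ _)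
  have hε4 : 0 < ε / 4 := by linarith
  obtain ⟨m, hmod⟩ := modulus f hε4
  set c := ((Finset.Icc (-(m:ℤ)) m).card : ℝ) with hc
  have hcnn : (0:ℝ) ≤ c := by positivity
  have hfn : (0:ℝ) ≤ ‖f‖ := norm_nonneg f
  have hApos : (0:ℝ) < 2 * ‖f‖ * c + 1 := by positivity
  set δ := (ε/4) / (2 * ‖f‖ * c + 1) with hδ
  have hδpos : 0 < δ := by positivity
  obtain ⟨K0, hK0⟩ := Metric.tendsto_atTop.1 hdens δ hδpos
  refine ⟨K0, fun K hK => ?_⟩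
  set aK := ((ν K) (cylB true)).toReal with haK
  set aI := (νinf (cylB true)).toReal with haI
  have hg : ∀ t : ℤ, Tendsto (fun i => birkAvg shift (x K) (N i) (gco t)
      - birkAvg shift xinf (N i) (gco t)) atTop (𝓝 (aK - aI)) := by
    intro t
    have h1 := hqg K (gco t)
    have h2 := hqginf (gco t)
    rw [integral_gco, inv_coord _ (hP K).2] at h1
    rw [integral_gco, inv_coord _ hPinf.2] at h2
    exact h1.sub h2
  have hL : Tendsto (fun i => |birkAvg shift (x K) (N i) f - birkAvg shift xinf (N i) f|)
      atTop (𝓝 |∫ y, f y ∂(ν K) - ∫ y, f y ∂νinf|) := ((hqg K f).sub (hqginf f)).abs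
  have hR : Tendsto (fun i => ε/4 + 2 * ‖f‖ * ∑ t ∈ Finset.Icc (-(m:ℤ)) m,
      (birkAvg shift (x K) (N i) (gco t) - birkAvg shift xinf (N i) (gco t))) atTop
      (𝓝 (ε/4 + 2 * ‖f‖ * (c * (aK - aI)))) := by
    have hsum : Tendsto (fun i => ∑ t ∈ Finset.Icc (-(m:ℤ)) m,
        (birkAvg shift (x K) (N i) (gco t) - birkAvg shift xinf (N i) (gco t))) atTop
        (𝓝 (∑ _t ∈ Finset.Icc (-(m:ℤ)) m, (aK - aI))) :=
      tendsto_finset_sum _ (fun t _ => hg t)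
    have hconst : (∑ _t ∈ Finset.Icc (-(m:ℤ)) m, (aK - aI)) = c * (aK - aI) := by
      rw [Finset.sum_const, nsmul_eq_mul, hc]
    rw [hconst] at hsum
    exact tendsto_const_nhds.add (hsum.const_mul _)
  have hmain : |∫ y, f y ∂(ν K) - ∫ y, f y ∂νinf| ≤ ε/4 + 2 * ‖f‖ * (c * (aK - aI)) :=
    le_of_tendsto_of_tendsto' hL hR
      (fun i => key_ineq f m hε4.le hmod (x K) xinf (hxle K) (N i))
  have hd : |aK - aI| < δ := by
    have := hK0 K hK
    rwa [Real.dist_eq] at this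
  have hA1 : 2 * ‖f‖ * (c * (aK - aI)) ≤ (2 * ‖f‖ * c) * δ := by
    have h1 : 2 * ‖f‖ * (c * (aK - aI)) = (2 * ‖f‖ * c) * (aK - aI) := by ring
    rw [h1]
    exact mul_le_mul_of_nonneg_left (le_trans (le_abs_self _) hd.le) (by positivity)
  have hA2 : (2 * ‖f‖ * c) * δ ≤ ε/4 := by
    have hδA : δ * (2 * ‖f‖ * c + 1) = ε/4 := div_mul_cancel₀ _ (ne_of_gt hApos)
    nlinarith
  rw [Real.dist_eq]
  calc |∫ y, f y ∂(ν K) - ∫ y, f y ∂νinf| ≤ ε/4 + 2 * ‖f‖ * (c * (aK - aI)) := hmain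
    _ ≤ ε/4 + ε/4 := by linarith
    _ < ε := by linarith
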